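/- Let B be a strictly increasing CDF with values in (0,1), g a probability density with full support, p ∈ ℝ, and b_L < 0 ≤ b_R. Define D̃(r) = ∫_{γ ∉ [−b_R,−b_L]} (r B(−p−γ−b_R) − (1−r) B(−p+γ+b_L)) g(γ) dγ. Then D̃ is strictly increasing in r, D̃(0) < 0, D̃(1) > 0, so there is a unique r** ∈ (0,1) with D̃(r) > 0 if and only if r > r**. -/
import Mathlib


open MeasureTheory Set

/-- The non-binding referendum net benefit D̃(r) (parties initially mis-aligned,
b_L < 0 ≤ b_R) is strictly increasing, negative at 0, positive at 1, with a unique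
interior threshold r**. -/
theorem stmt_10 (B g : ℝ → ℝ) (hBm : StrictMono B) (hB01 : ∀ z, 0 < B z ∧ B z < 1)
    (hgpos : ∀ x, 0 < g x) (hg1 : ∫ x, g x = 1) (hgi : Integrable g)
    (p bL bR : ℝ) (h1 : bL < 0) (h2 : 0 ≤ bR)
    (hi1 : Integrable (fun γ => B (-p - γ - bR) * g γ))
    (hi2 : Integrable (fun γ => B (-p + γ + bL) * g γ)) :
    StrictMono (fun r : ℝ =>
        ∫ γ in (Icc (-bR) (-bL))ᶜ, (r * B (-p - γ - bR) - (1 - r) * B (-p + γ + bL)) * g γ) ∧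
    (∫ γ in (Icc (-bR) (-bL))ᶜ,
        ((0:ℝ) * B (-p - γ - bR) - (1 - 0) * B (-p + γ + bL)) * g γ) < 0 ∧
    (∫ γ in (Icc (-bR) (-bL))ᶜ,
        ((1:ℝ) * B (-p - γ - bR) - (1 - 1) * B (-p + γ + bL)) * g γ) > 0 ∧
    ∃! rss : ℝ, rss ∈ Ioo (0 : ℝ) 1 ∧
      ∀ r : ℝ,
        (∫ γ in (Icc (-bR) (-bL))ᶜ,
            (r * B (-p - γ - bR) - (1 - r) * B (-p + γ + bL)) * g γ) > 0
          ↔ r > rss := by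
  set S : Set ℝ := (Icc (-bR) (-bL))ᶜ with hS
  set a : ℝ := ∫ γ in S, B (-p - γ - bR) * g γ with ha
  set c : ℝ := ∫ γ in S, B (-p + γ + bL) * g γ with hc
  have hSm : MeasurableSet S := (measurableSet_Icc).compl
  have hSpos : 0 < volume S := by
    have hsub : Ioi (-bL) ⊆ S := by
      intro x hx
      simp only [hS, mem_compl_iff, mem_Icc, not_and, not_le]
      intro _
      exact hx
    refine lt_of_lt_of_le ?_ (measure_mono hsub)
    simp [Real.volume_Ioi]
  have hApos : ∀ γ : ℝ, 0 < B (-p - γ - bR) * g γ :=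
    fun γ => mul_pos (hB01 _).1 (hgpos γ)
  have hCpos : ∀ γ : ℝ, 0 < B (-p + γ + bL) * g γ :=
    fun γ => mul_pos (hB01 _).1 (hgpos γ)
  have hIA : IntegrableOn (fun γ => B (-p - γ - bR) * g γ) S := hi1.integrableOn
  have hIC : IntegrableOn (fun γ => B (-p + γ + bL) * g γ) S := hi2.integrableOn
  have hapos : 0 < a := by
    rw [ha]
    rw [setIntegral_pos_iff_support_of_nonneg_ae
      (Filter.Eventually.of_forall fun γ => (hApos γ).le) hIA]
    have : Function.support (fun γ => B (-p - γ - bR) * g γ) ∩ S = S := by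
      apply inter_eq_self_of_subset_right
      intro x _
      exact (hApos x).ne'
    rw [this]; exact hSpos
  have hcpos : 0 < c := by
    rw [hc]
    rw [setIntegral_pos_iff_support_of_nonneg_ae
      (Filter.Eventually.of_forall fun γ => (hCpos γ).le) hIC]
    have : Function.support (fun γ => B (-p + γ + bL) * g γ) ∩ S = S := by
      apply inter_eq_self_of_subset_right
      intro x _
      exact (hCpos x).ne'
    rw [this]; exact hSpos
  have key : ∀ r : ℝ,
      (∫ γ in S, (r * B (-p - γ - bR) - (1 - r) * B (-p + γ + bL)) * g γ)
        = r * a - (1 - r) * c := by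
    intro r
    have h1 : (∫ γ in S, (r * B (-p - γ - bR) - (1 - r) * B (-p + γ + bL)) * g γ)
        = ∫ γ in S, (r * (B (-p - γ - bR) * g γ) - (1 - r) * (B (-p + γ + bL) * g γ)) := by
      congr 1; ext γ; ring
    rw [h1, integral_sub (hIA.const_mul r) (hIC.const_mul (1 - r)),
      integral_const_mul, integral_const_mul, ha, hc]
  refine ⟨?_, ?_, ?_, ?_⟩
  · intro x y hxy
    simp only [key]
    nlinarith
  · rw [key]; nlinarith
  · rw [key]; nlinarith
  · have hac : 0 < a + c := by linarith
    refine ⟨c / (a + c), ⟨⟨by positivity, by rw [div_lt_one hac]; linarith⟩, ?_⟩, ?_⟩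
    · intro r
      rw [key, gt_iff_lt, gt_iff_lt, div_lt_iff₀ hac]
      constructor <;> intro h <;> nlinarith
    · rintro y ⟨hy01, hyiff⟩
      have hiff : ∀ r : ℝ,
          (∫ γ in S, (r * B (-p - γ - bR) - (1 - r) * B (-p + γ + bL)) * g γ) > 0
            ↔ r > c / (a + c) := by
        intro r
        rw [key, gt_iff_lt, gt_iff_lt, div_lt_iff₀ hac]
        constructor <;> intro h <;> nlinarith
      have h1 : ¬ (y > c / (a + c)) := fun h => lt_irrefl y ((hyiff y).mp ((hiff y).mpr h))
      have h2 : ¬ (c / (a + c) > y) := fun h =>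
        lt_irrefl (c / (a + c)) ((hiff _).mp ((hyiff _).mpr h))
      linarith [not_lt.mp h1, not_lt.mp h2]
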